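/- Let H be a unital locally standard measure algebra with st(H) = s. Then Spec(H) = { (a/b)·s : b ∈ Ω(s), 1 ≤ a ≤ b }. In particular, Spec(Stₙ) = {1, 2, …, n}. -/

import Mathlib

open scoped BigOperators

noncomputable section

/-! ### Steinitz numbers -/

/-- A Steinitz number: a formal product `∏ p ^ r_p` over all primes, with exponents
`r_p ∈ ℕ ∪ {∞}`, encoded as the function sending each prime to its exponent. -/
def SteinitzNumber : Type := Nat.Primes → ℕ∞

namespace SteinitzNumber

instance : One SteinitzNumber := ⟨fun _ => 0⟩

instance : Mul SteinitzNumber := ⟨fun s t p => s p + t p⟩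

/-- The Steinitz number associated with a positive integer `n`. -/
def ofNat (n : ℕ) : SteinitzNumber := fun p => (n.factorization p : ℕ∞)

/-- `b ∈ Ω(s)`: the positive integer `b` divides the Steinitz number `s`. -/
def NatDvd (b : ℕ) (s : SteinitzNumber) : Prop :=
  0 < b ∧ ∀ p : Nat.Primes, (b.factorization p : ℕ∞) ≤ s p

/-- The quotient `s / b` of a Steinitz number by a positive integer dividing it. -/
def divNat (s : SteinitzNumber) (b : ℕ) : SteinitzNumber :=
  fun p => s p - (b.factorization p : ℕ∞)

/-- An infinite Steinitz number is one which is not a positive integer. -/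
def Infinite (s : SteinitzNumber) : Prop := ∀ n : ℕ, s ≠ ofNat n

/-- Steinitz numbers `s` and `t` are rationally connected: `t = (a/b)·s` for positive
integers `a, b` (expressed by cross multiplication). -/
def RationallyConnected (s t : SteinitzNumber) : Prop :=
  ∃ a b : ℕ, 0 < a ∧ 0 < b ∧ ofNat b * t = ofNat a * s

/-- `s₁` finitely divides `s₂`: `s₁ = s₂ / b` for some `b ∈ Ω(s₂)`. -/
def FinDvd (s₁ s₂ : SteinitzNumber) : Prop :=
  ∃ b : ℕ, NatDvd b s₂ ∧ ofNat b * s₁ = s₂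

/-- `s₁ ≤ s₂` iff `s₁ = (a/b)·s₂` with `b ∈ Ω(s₂)` and `1 ≤ a ≤ b`. -/
def Le (s₁ s₂ : SteinitzNumber) : Prop :=
  ∃ a b : ℕ, 0 < a ∧ a ≤ b ∧ NatDvd b s₂ ∧ ofNat b * s₁ = ofNat a * s₂

/-- A saturated set of Steinitz numbers. -/
def Saturated (S : Set SteinitzNumber) : Prop :=
  (∀ s₁ ∈ S, ∀ s₂ ∈ S, RationallyConnected s₁ s₂) ∧
  (∀ s₂ ∈ S, ∀ s₁, FinDvd s₁ s₂ → s₁ ∈ S) ∧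
  (∀ s ∈ S, ∀ n : ℕ, ofNat n * s ∈ S → ∀ k : ℕ, 1 ≤ k → k ≤ n → ofNat k * s ∈ S)

/-- `S(∞, s) = { (a/b)·s : a ∈ ℕ, b ∈ Ω(s) }`. -/
def SInf (s : SteinitzNumber) : Set SteinitzNumber :=
  {t | ∃ a b : ℕ, 0 < a ∧ NatDvd b s ∧ ofNat b * t = ofNat a * s}

/-- `S(r, s) = { (a/b)·s : a, b ∈ ℕ, b ∈ Ω(s), a ≤ r·b }`. -/
def SBdd (r : ℝ) (s : SteinitzNumber) : Set SteinitzNumber :=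
  {t | ∃ a b : ℕ, 0 < a ∧ NatDvd b s ∧ (a : ℝ) ≤ r * b ∧ ofNat b * t = ofNat a * s}

/-- `S⁺(r, s) = { (a/b)·s : a, b ∈ ℕ, b ∈ Ω(s), a < r·b }`. -/
def SBddPlus (r : ℝ) (s : SteinitzNumber) : Set SteinitzNumber :=
  {t | ∃ a b : ℕ, 0 < a ∧ NatDvd b s ∧ (a : ℝ) < r * b ∧ ofNat b * t = ofNat a * s}

end SteinitzNumber

/-! ### Measure algebras -/

/-- A measure algebra: a Boolean algebra (an associative, commutative algebra over `𝔽₂`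
in which every element is idempotent) equipped with a measure `μ` which is positive on
nonzero elements and additive on orthogonal pairs. -/
structure MeasureAlgebra : Type 1 where
  carrier : Type
  [ring : NonUnitalCommRing carrier]
  idem : ∀ x : carrier, x * x = x
  mu : carrier → ℝ
  mu_nonneg : ∀ a, 0 ≤ mu a
  mu_eq_zero_iff : ∀ a, mu a = 0 ↔ a = 0
  mu_add : ∀ a b : carrier, a * b = 0 → mu (a + b) = mu a + mu b

attribute [instance] MeasureAlgebra.ring

namespace MeasureAlgebra

/-- Isomorphism of measure algebras: a Boolean algebra isomorphism preserving the measures. -/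
def Isomorphic (H₁ H₂ : MeasureAlgebra) : Prop :=
  ∃ φ : H₁.carrier ≃+* H₂.carrier, ∀ a, H₂.mu (φ a) = H₁.mu a

/-- Scalar equivalence of measure algebras: a Boolean algebra isomorphism multiplying
the measure by a positive constant `α`. -/
def ScalarEquivalent (H₁ H₂ : MeasureAlgebra) : Prop :=
  ∃ α : ℝ, 0 < α ∧ ∃ φ : H₁.carrier ≃+* H₂.carrier, ∀ a, H₂.mu (φ a) = α * H₁.mu a

/-- The measure subalgebra of a measure algebra supported on a subring, with the
restricted measure. -/
def restrict (H : MeasureAlgebra) (S : NonUnitalSubring H.carrier) : MeasureAlgebra where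
  carrier := S
  idem := fun x => Subtype.ext (H.idem x.1)
  mu := fun x => H.mu x.1
  mu_nonneg := fun a => H.mu_nonneg a.1
  mu_eq_zero_iff := fun a => by
    rw [H.mu_eq_zero_iff a.1]
    exact ⟨fun h => Subtype.ext h, fun h => congrArg Subtype.val h⟩
  mu_add := fun a b hab => H.mu_add a.1 b.1 (congrArg Subtype.val hab)

/-- The standard measure algebra `Stₙ = 𝔽₂ⁿ` with `μ(x₁, …, xₙ) = (x₁ + ⋯ + xₙ)/n`. -/
def St (n : ℕ) : MeasureAlgebra where
  carrier := Fin n → ZMod 2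
  idem := fun x => funext fun i => by
    have h : ∀ a : ZMod 2, a * a = a := by decide
    exact h (x i)
  mu := fun x => (∑ i, ((x i).val : ℝ)) / n
  mu_nonneg := fun a => by positivity
  mu_eq_zero_iff := fun a => by
    constructor
    · intro h
      rcases Nat.eq_zero_or_pos n with hn | hn
      · subst hn; exact funext fun i => i.elim0
      · have hne : ((n : ℝ)) ≠ 0 := by positivity
        have h2 : (∑ i, ((a i).val : ℝ)) = 0 := by
          rcases div_eq_zero_iff.mp h with h' | h'
          · exact h'
          · exact absurd h' hne
        have h3 := (Finset.sum_eq_zero_iff_of_nonneg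
          (fun i _ => by positivity : ∀ i ∈ Finset.univ, (0:ℝ) ≤ ((a i).val : ℝ))).mp h2
        funext i
        have h4 : ((a i).val : ℝ) = 0 := h3 i (Finset.mem_univ i)
        have h5 : (a i).val = 0 := by exact_mod_cast h4
        exact (ZMod.val_eq_zero _).mp h5
    · intro h; subst h; simp
  mu_add := fun a b hab => by
    have key : ∀ u v : ZMod 2, u * v = 0 → (u + v).val = u.val + v.val := by decide
    have h : ∀ i, (((a + b) i).val : ℝ) = ((a i).val : ℝ) + ((b i).val : ℝ) := by
      intro i
      have h0 : a i * b i = 0 := congrFun hab i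
      have h1 := key (a i) (b i) h0
      show (((a i + b i)).val : ℝ) = _
      rw [h1]
      push_cast
      ring
    show (∑ i, (((a + b) i).val : ℝ)) / n
        = (∑ i, ((a i).val : ℝ)) / n + (∑ i, ((b i).val : ℝ)) / n
    rw [← add_div, ← Finset.sum_add_distrib]
    congr 1
    exact Finset.sum_congr rfl fun i _ => h i

/-- A measure algebra is unital if it has an identity element of measure `1`. -/
def Unital (H : MeasureAlgebra) : Prop :=
  ∃ e : H.carrier, (∀ x, e * x = x) ∧ H.mu e = 1

/-- A measure algebra is locally standard if every finite subset is contained in a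
measure subalgebra scalar equivalent to a standard one. -/
def LocallyStandard (H : MeasureAlgebra) : Prop :=
  ∀ t : Finset H.carrier, ∃ (S : NonUnitalSubring H.carrier) (n : ℕ), 0 < n ∧
    (↑t : Set H.carrier) ⊆ S ∧ (H.restrict S).ScalarEquivalent (St n)

/-- For an (idempotent) element `h`, the subring `hH = {x | h·x = x}`. -/
def cornerSubring (H : MeasureAlgebra) (h : H.carrier) : NonUnitalSubring H.carrier where
  carrier := {x | h * x = x}
  zero_mem' := mul_zero h
  add_mem' := by
    intro a b ha hb
    simp only [Set.mem_setOf_eq] at *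
    rw [mul_add, ha, hb]
  neg_mem' := by
    intro a ha
    simp only [Set.mem_setOf_eq] at *
    rw [mul_neg, ha]
  mul_mem' := by
    intro a b ha hb
    simp only [Set.mem_setOf_eq] at *
    rw [← mul_assoc, ha]

/-- The unital measure algebra `H_h = (hH, μ(·)/μ(h))`. -/
def corner (H : MeasureAlgebra) (h : H.carrier) : MeasureAlgebra where
  carrier := H.cornerSubring h
  idem := fun x => Subtype.ext (H.idem x.1)
  mu := fun x => H.mu x.1 / H.mu h
  mu_nonneg := fun a => div_nonneg (H.mu_nonneg a.1) (H.mu_nonneg h)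
  mu_eq_zero_iff := fun a => by
    constructor
    · intro ha
      rcases div_eq_zero_iff.mp ha with h' | h'
      · exact Subtype.ext ((H.mu_eq_zero_iff a.1).mp h')
      · have hh : h = 0 := (H.mu_eq_zero_iff h).mp h'
        have h2 : h * (a : H.carrier) = a := a.2
        apply Subtype.ext
        show (a : H.carrier) = 0
        generalize hx : (a : H.carrier) = x at h2 ⊢
        rw [← h2, hh, zero_mul]
    · intro h'
      subst h'
      have h0 : H.mu ((0 : H.cornerSubring h) : H.carrier) = 0 :=
        (H.mu_eq_zero_iff _).mpr rfl
      show H.mu ((0 : H.cornerSubring h) : H.carrier) / H.mu h = 0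
      rw [h0, zero_div]
  mu_add := fun a b hab => by
    have : H.mu ((a : H.carrier) + b) = H.mu a + H.mu b :=
      H.mu_add a.1 b.1 (congrArg Subtype.val hab)
    show H.mu ((a + b : H.cornerSubring h) : H.carrier) / H.mu h = _
    rw [show ((a + b : H.cornerSubring h) : H.carrier) = (a : H.carrier) + b from rfl,
      this, add_div]

/-- `D(H)`: the set of `n` such that `H` has a subalgebra containing the identity of `H`
and isomorphic to the standard measure algebra `Stₙ`. -/
def D (H : MeasureAlgebra) : Set ℕ :=
  {n | ∃ S : NonUnitalSubring H.carrier,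
    (∃ e ∈ S, ∀ x : H.carrier, e * x = x) ∧ (H.restrict S).Isomorphic (St n)}

/-- The Steinitz number `st(H)` of a (unital locally standard) measure algebra:
the least common multiple of `D(H)`. -/
def st (H : MeasureAlgebra) : SteinitzNumber :=
  fun p => ⨆ n ∈ H.D, (n.factorization p : ℕ∞)

/-- The spectrum of a measure algebra: the set of Steinitz numbers `st(H_h)` for `h ≠ 0`. -/
def Spec (H : MeasureAlgebra) : Set SteinitzNumber :=
  {s | ∃ h : H.carrier, h ≠ 0 ∧ (H.corner h).st = s}

end MeasureAlgebra

attribute [reducible] MeasureAlgebra.St MeasureAlgebra.restrict MeasureAlgebra.corner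

section SpecProof
open MeasureAlgebra SteinitzNumber Finset

variable {H : MeasureAlgebra}

/-- support of a vector over `ZMod 2` -/
def supp {n : ℕ} (x : Fin n → ZMod 2) : Finset (Fin n) :=
  Finset.univ.filter (fun i => x i = 1)

lemma mem_supp {n : ℕ} {x : Fin n → ZMod 2} {i : Fin n} : i ∈ supp x ↔ x i = 1 := by
  simp [supp]

lemma zmod2_ne_one {a : ZMod 2} (h : a ≠ 1) : a = 0 := by revert a h; decide

lemma supp_card_le {n : ℕ} (x : Fin n → ZMod 2) : (supp x).card ≤ n := by
  simpa [supp] using Finset.card_filter_le Finset.univ (fun i => x i = 1)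

lemma st_mu {n : ℕ} (x : Fin n → ZMod 2) :
    (St n).mu x = ((supp x).card : ℝ) / n := by
  show (∑ i, ((x i).val : ℝ)) / n = _
  congr 1
  have h1 : ∀ i, ((x i).val : ℝ) = if x i = 1 then 1 else 0 := by
    intro i
    have : (x i).val = if x i = 1 then 1 else 0 := by
      revert x; intro x; revert i; intro i; generalize x i = a; revert a; decide
    rw [this]; split <;> simp
  rw [Finset.sum_congr rfl (fun i _ => h1 i), Finset.sum_boole]
  rfl

lemma st_mu_card_eq {n : ℕ} (hn : 0 < n) {x y : Fin n → ZMod 2}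
    (h : (St n).mu x = (St n).mu y) : (supp x).card = (supp y).card := by
  rw [st_mu, st_mu] at h
  have hn' : (n : ℝ) ≠ 0 := by positivity
  have h2 : ((supp x).card : ℝ) = (supp y).card := by
    field_simp at h
    exact_mod_cast h
  exact_mod_cast h2

/-- the `i`-th atom of `St n` -/
def atom {n : ℕ} (i : Fin n) : (St n).carrier := fun j => if j = i then 1 else 0

lemma atom_mul {n : ℕ} {i j : Fin n} (h : i ≠ j) : atom i * atom j = 0 := by
  funext k
  show (if k = i then (1:ZMod 2) else 0) * (if k = j then 1 else 0) = 0
  by_cases hk : k = i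
  · subst hk
    rw [if_pos rfl, if_neg h]
    simp
  · rw [if_neg hk, zero_mul]

lemma sum_atom {n : ℕ} : (∑ i, atom i : (St n).carrier) = fun _ => 1 := by
  funext k
  show (∑ i, atom i : Fin n → ZMod 2) k = 1
  rw [Finset.sum_apply]
  show (∑ i, if k = i then (1:ZMod 2) else 0) = 1
  rw [Finset.sum_ite_eq]
  simp

lemma supp_atom {n : ℕ} (i : Fin n) : supp (atom i) = {i} := by
  ext j
  simp only [mem_supp, Finset.mem_singleton]
  show (if j = i then (1:ZMod 2) else 0) = 1 ↔ j = i
  split <;> simp_all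

lemma supp_one {n : ℕ} : supp (fun _ => (1:ZMod 2) : Fin n → ZMod 2) = Finset.univ := by
  ext j; simp [mem_supp]

lemma mu_one {n : ℕ} (hn : 0 < n) : (St n).mu (fun _ => (1:ZMod 2)) = 1 := by
  rw [st_mu, supp_one]
  simp
  omega

end SpecProof
section SpecProof2
open MeasureAlgebra SteinitzNumber Finset

lemma mu_zero (H : MeasureAlgebra) : H.mu 0 = 0 := (H.mu_eq_zero_iff 0).mpr rfl

lemma mu_pos (H : MeasureAlgebra) {h : H.carrier} (hh : h ≠ 0) : 0 < H.mu h :=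
  lt_of_le_of_ne (H.mu_nonneg h) (fun e => hh ((H.mu_eq_zero_iff h).mp e.symm))

lemma mu_sum (H : MeasureAlgebra) {ι : Type*} [DecidableEq ι] (s : Finset ι)
    (f : ι → H.carrier)
    (horth : ∀ i ∈ s, ∀ j ∈ s, i ≠ j → f i * f j = 0) :
    H.mu (∑ i ∈ s, f i) = ∑ i ∈ s, H.mu (f i) := by
  induction s using Finset.induction with
  | empty => simpa using mu_zero H
  | @insert a s ha ih =>
    rw [Finset.sum_insert ha, Finset.sum_insert ha,
      H.mu_add _ _ ?_, ih (fun i hi j hj hij =>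
        horth i (Finset.mem_insert_of_mem hi) j (Finset.mem_insert_of_mem hj) hij)]
    rw [Finset.mul_sum]
    apply Finset.sum_eq_zero
    intro j hj
    exact horth a (Finset.mem_insert_self a s) j (Finset.mem_insert_of_mem hj)
      (fun e => ha (e ▸ hj))

/-- identity elements are unique in a commutative setting -/
lemma ids_eq {R : Type*} [NonUnitalCommRing R] {e e' : R}
    (he : ∀ x, e * x = x) (he' : ∀ x, e' * x = x) : e = e' := by
  have h1 : e' * e = e := he' e
  have h2 : e * e' = e' := he e'
  rw [← h1, mul_comm, h2]

lemma identity_image {A B : Type*} [NonUnitalCommRing A] [NonUnitalCommRing B]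
    (φ : A ≃+* B) {e : A} (he : ∀ x, e * x = x) : ∀ y, φ e * y = y := by
  intro y
  rw [← φ.apply_symm_apply y, ← map_mul, he]

lemma st_one_unique {M : ℕ} (hM : 0 < M) {u : (St M).carrier}
    (hu : ∀ y, u * y = y) : u = fun _ => 1 := by
  funext i
  have h := congrFun (hu (atom i)) i
  have h2 : (u * atom i) i = u i * (if i = i then (1:ZMod 2) else 0) := rfl
  rw [if_pos rfl, mul_one] at h2
  rw [h2] at h
  have h3 : atom i i = (1:ZMod 2) := by show (if i = i then (1:ZMod 2) else 0) = 1; simp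
  rw [h3] at h
  exact h

/-- If `St m` embeds (with measure scaled by a constant) into `St N`, then `m` divides
the cardinality of the support of the image of the identity. -/
lemma emb_dvd {m N : ℕ} (hm : 0 < m) (hN : 0 < N)
    (ι : (St m).carrier →ₙ+* (St N).carrier) {c : ℝ}
    (hc : ∀ x, (St N).mu (ι x) = c * (St m).mu x) :
    m ∣ (supp (ι (fun _ => 1))).card := by
  have horth : ∀ i ∈ (Finset.univ : Finset (Fin m)), ∀ j ∈ Finset.univ, i ≠ j →
      ι (atom i) * ι (atom j) = 0 := by
    intro i _ j _ hij
    rw [← map_mul, atom_mul hij, map_zero]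
  have hsum : ι (fun _ => 1) = ∑ i, ι (atom i) := by
    rw [← map_sum, sum_atom]
  have hmusum := mu_sum (St N) Finset.univ (fun i => ι (atom i)) horth
  -- all cards equal
  set i0 : Fin m := ⟨0, hm⟩
  set k := (supp (ι (atom i0))).card with hk
  have hcard : ∀ i : Fin m, (supp (ι (atom i))).card = k := by
    intro i
    apply st_mu_card_eq hN
    rw [hc, hc]
    congr 1
    rw [st_mu, st_mu, supp_atom, supp_atom]
    simp
  have htot : (supp (ι (fun _ => 1))).card = m * k := by
    have h1 : (St N).mu (ι (fun _ => 1)) = m * ((k : ℝ) / N) := by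
      rw [hsum, hmusum]
      rw [Finset.sum_congr rfl (fun i _ => by rw [st_mu, hcard i])]
      rw [Finset.sum_const, Finset.card_univ, Fintype.card_fin, nsmul_eq_mul]
    rw [st_mu] at h1
    have hN' : (N:ℝ) ≠ 0 := by positivity
    have : ((supp (ι (fun _ => 1))).card : ℝ) = (m : ℝ) * k := by
      field_simp at h1
      exact_mod_cast h1
    exact_mod_cast this
  exact ⟨k, htot⟩

lemma D_pos {H : MeasureAlgebra} (hu : H.Unital) {n : ℕ} (hn : n ∈ H.D) : 0 < n := by
  rcases Nat.eq_zero_or_pos n with h0 | h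
  · exfalso
    subst h0
    obtain ⟨S, ⟨e', he'S, he'⟩, φ, hφ⟩ := hn
    obtain ⟨e, he, hme⟩ := hu
    have hee : e = e' := ids_eq he he'
    subst hee
    have h1 : (⟨e, he'S⟩ : (H.restrict S).carrier) = 0 := by
      apply φ.injective
      apply funext
      intro i
      exact i.elim0
    have h2 : e = 0 := congrArg Subtype.val h1
    rw [h2] at hme
    rw [mu_zero] at hme
    norm_num at hme
  · exact h

end SpecProof2
section SpecProof3
open MeasureAlgebra SteinitzNumber Finset

/-- A standard witness around an element `h`. -/
structure Wit (H : MeasureAlgebra) (h : H.carrier) where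
  S : NonUnitalSubring H.carrier
  M : ℕ
  φ : (H.restrict S).carrier ≃+* (St M).carrier
  hM : 0 < M
  hmu : ∀ z, (St M).mu (φ z) = H.mu z.1
  hh : h ∈ S
  e : H.carrier
  heS : e ∈ S
  he : ∀ x, e * x = x

namespace Wit

variable {H : MeasureAlgebra} {h : H.carrier}

def a (w : Wit H h) : ℕ := (supp (w.φ ⟨h, w.hh⟩)).card

lemma mem_D (w : Wit H h) : w.M ∈ H.D :=
  ⟨w.S, ⟨w.e, w.heS, w.he⟩, ⟨w.φ, fun z => w.hmu z⟩⟩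

lemma mu_h (w : Wit H h) : H.mu h = (w.a : ℝ) / w.M := by
  have := w.hmu ⟨h, w.hh⟩
  rw [st_mu] at this
  exact this.symm

lemma a_pos (w : Wit H h) (hh0 : h ≠ 0) : 0 < w.a := by
  by_contra hc
  have ha : w.a = 0 := Nat.eq_zero_of_not_pos hc
  have := w.mu_h
  rw [ha] at this
  simp at this
  exact hh0 ((H.mu_eq_zero_iff h).mp this)

lemma a_le (w : Wit H h) : w.a ≤ w.M := supp_card_le _

lemma cross (w w' : Wit H h) (hh0 : h ≠ 0) : w.a * w'.M = w'.a * w.M := by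
  have h1 := w.mu_h
  have h2 := w'.mu_h
  rw [h1] at h2
  have hM : (w.M : ℝ) ≠ 0 := by have := w.hM; positivity
  have hM' : (w'.M : ℝ) ≠ 0 := by have := w'.hM; positivity
  field_simp at h2
  rw [mul_comm w'.a]
  exact_mod_cast h2

end Wit

/-- the ambient identity of `St M` is the constant function 1 -/
lemma phi_id_eq_one {H : MeasureAlgebra} {S : NonUnitalSubring H.carrier} {M : ℕ}
    (hM : 0 < M) (φ : (H.restrict S).carrier ≃+* (St M).carrier)
    {e : H.carrier} (heS : e ∈ S) (he : ∀ x, e * x = x) :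
    φ ⟨e, heS⟩ = fun _ => 1 := by
  apply st_one_unique hM
  apply identity_image φ
  intro x
  exact Subtype.ext (he x.1)

/-- Refinement: any finite subset lies in a standard subalgebra containing the identity,
with measure preserved (not just scaled). -/
lemma refine {H : MeasureAlgebra} (hu : H.Unital) (hls : H.LocallyStandard)
    (t : Finset H.carrier) :
    ∃ (S : NonUnitalSubring H.carrier) (M : ℕ)
      (φ : (H.restrict S).carrier ≃+* (St M).carrier),
      0 < M ∧ (↑t : Set H.carrier) ⊆ S ∧ (∀ z, (St M).mu (φ z) = H.mu z.1) ∧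
      ∃ e ∈ S, ∀ x : H.carrier, e * x = x := by
  classical
  obtain ⟨e, he, hme⟩ := hu
  obtain ⟨S, M, hM, hsub, α, hα, φ, hmu⟩ := hls (insert e t)
  have heS : e ∈ S := hsub (by simp)
  have hid : φ ⟨e, heS⟩ = fun _ => 1 := phi_id_eq_one hM φ heS he
  have hα1 : α = 1 := by
    have h1 := hmu ⟨e, heS⟩
    rw [hid, mu_one hM] at h1
    have h2 : (H.restrict S).mu ⟨e, heS⟩ = H.mu e := rfl
    rw [h2, hme, mul_one] at h1
    exact h1.symm
  refine ⟨S, M, φ, hM, ?_, ?_, e, heS, he⟩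
  · intro x hx
    exact hsub (by simp [hx])
  · intro z
    rw [hmu z, hα1, one_mul]

lemma exists_wit {H : MeasureAlgebra} (hu : H.Unital) (hls : H.LocallyStandard)
    (t : Finset H.carrier) (h : H.carrier) :
    ∃ w : Wit H h, (↑t : Set H.carrier) ⊆ w.S := by
  classical
  obtain ⟨S, M, φ, hM, hsub, hmu, e, heS, he⟩ := refine hu hls (insert h t)
  exact ⟨⟨S, M, φ, hM, hmu, hsub (by simp), e, heS, he⟩, fun x hx => hsub (by simp [hx])⟩

/-- a subalgebra isomorphic to a standard one is finite -/
lemma S_finite {H : MeasureAlgebra} {S : NonUnitalSubring H.carrier} {M : ℕ}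
    (φ : (H.restrict S).carrier ≃+* (St M).carrier) :
    (S : Set H.carrier).Finite := by
  haveI : Fintype (St M).carrier := inferInstanceAs (Fintype (Fin M → ZMod 2))
  haveI : Finite (S : Set H.carrier) := Finite.of_equiv _ φ.toEquiv.symm
  exact Set.toFinite _

/-- A unital embedding between standard witnesses gives divisibility. -/
lemma dvd_of_subset {H : MeasureAlgebra} {S₁ S : NonUnitalSubring H.carrier} {m M : ℕ}
    (hm : 0 < m) (hM : 0 < M)
    (φ₁ : (H.restrict S₁).carrier ≃+* (St m).carrier)
    (hφ₁ : ∀ z, (St m).mu (φ₁ z) = H.mu z.1)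
    {e : H.carrier} (heS₁ : e ∈ S₁) (he : ∀ x, e * x = x)
    (φ : (H.restrict S).carrier ≃+* (St M).carrier)
    (hφ : ∀ z, (St M).mu (φ z) = H.mu z.1)
    (hsub : (S₁ : Set H.carrier) ⊆ S) : m ∣ M := by
  have heS : e ∈ S := hsub heS₁
  let ι : (St m).carrier →ₙ+* (St M).carrier :=
    { toFun := fun y => φ ⟨(φ₁.symm y).1, hsub (φ₁.symm y).2⟩
      map_zero' := by
        have h0 : φ₁.symm 0 = 0 := map_zero _
        simp only [h0]
        have : (⟨((0 : (H.restrict S₁).carrier)).1, hsub (0 : (H.restrict S₁).carrier).2⟩ :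
            (H.restrict S).carrier) = 0 := Subtype.ext rfl
        rw [this, map_zero]
      map_add' := by
        intro y y'
        dsimp only
        rw [← map_add φ]
        congr 1
        apply Subtype.ext
        show ((φ₁.symm (y + y')).1 : H.carrier) = (φ₁.symm y).1 + (φ₁.symm y').1
        rw [map_add φ₁.symm]
        rfl
      map_mul' := by
        intro y y'
        dsimp only
        rw [← map_mul φ]
        congr 1
        apply Subtype.ext
        show ((φ₁.symm (y * y')).1 : H.carrier) = (φ₁.symm y).1 * (φ₁.symm y').1
        rw [map_mul φ₁.symm]
        rfl }
  have hc : ∀ x, (St M).mu (ι x) = 1 * (St m).mu x := by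
    intro x
    show (St M).mu (φ ⟨(φ₁.symm x).1, _⟩) = 1 * (St m).mu x
    rw [hφ, one_mul, ← hφ₁ (φ₁.symm x), φ₁.apply_symm_apply]
  have hι1 : ι (fun _ => 1) = fun _ => 1 := by
    have h1 : φ₁.symm (fun _ => 1) = ⟨e, heS₁⟩ := by
      rw [← phi_id_eq_one hm φ₁ heS₁ he, φ₁.symm_apply_apply]
    show φ ⟨(φ₁.symm (fun _ => 1)).1, _⟩ = fun _ => 1
    have h2 : (⟨(φ₁.symm (fun _ => 1)).1, hsub (φ₁.symm (fun _ => 1)).2⟩ :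
        (H.restrict S).carrier) = ⟨e, heS⟩ := by
      apply Subtype.ext
      show ((φ₁.symm (fun _ => 1)).1 : H.carrier) = e
      rw [h1]
    rw [h2]
    exact phi_id_eq_one hM φ heS he
  have := emb_dvd hm hM ι hc
  rw [hι1, supp_one] at this
  simpa using this

/-- Combined refinement with divisibility over a finite set of elements of `D`. -/
lemma exists_wit_dvd {H : MeasureAlgebra} (hu : H.Unital) (hls : H.LocallyStandard)
    (h : H.carrier) (L : Finset ℕ) (hL : ∀ N ∈ L, N ∈ H.D) :
    ∃ w : Wit H h, ∀ N ∈ L, N ∣ w.M := by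
  classical
  induction L using Finset.induction with
  | empty =>
    obtain ⟨w, -⟩ := exists_wit hu hls ∅ h
    exact ⟨w, by simp⟩
  | @insert N L hN ih =>
    obtain ⟨w, hw⟩ := ih (fun N' hN' => hL N' (Finset.mem_insert_of_mem hN'))
    obtain ⟨SN, ⟨eN, heN, heN'⟩, ψ, hψ⟩ := hL N (Finset.mem_insert_self N L)
    have hNpos : 0 < N := D_pos hu (hL N (Finset.mem_insert_self N L))
    have hfin1 : (SN : Set H.carrier).Finite := S_finite ψ
    have hfin2 : (w.S : Set H.carrier).Finite := S_finite w.φ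
    obtain ⟨w', hw'⟩ := exists_wit hu hls (hfin1.toFinset ∪ hfin2.toFinset) h
    have hsub1 : (SN : Set H.carrier) ⊆ w'.S := by
      intro x hx
      exact hw' (by simp [hx])
    have hsub2 : (w.S : Set H.carrier) ⊆ w'.S := by
      intro x hx
      exact hw' (by simp [hx])
    refine ⟨w', ?_⟩
    intro N' hN'
    rcases Finset.mem_insert.mp hN' with h1 | h1
    · subst h1
      exact dvd_of_subset hNpos w'.hM ψ (fun z => hψ z) heN heN' w'.φ w'.hmu hsub1
    · exact dvd_trans (hw N' h1)
        (dvd_of_subset w.hM w'.hM w.φ w.hmu w.heS w.he w'.φ w'.hmu hsub2)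

end SpecProof3
section SpecProof4
open MeasureAlgebra SteinitzNumber Finset

variable {H : MeasureAlgebra}

/-- `h` as element of the corner algebra. -/
def cornerOne (H : MeasureAlgebra) (h : H.carrier) : (H.corner h).carrier :=
  ⟨h, H.idem h⟩

lemma cornerOne_id (h : H.carrier) : ∀ x : (H.corner h).carrier, cornerOne H h * x = x :=
  fun x => Subtype.ext x.2

lemma corner_unital {h : H.carrier} (hh0 : h ≠ 0) : (H.corner h).Unital := by
  refine ⟨cornerOne H h, cornerOne_id h, ?_⟩
  show H.mu h / H.mu h = 1
  exact div_self (ne_of_gt (mu_pos H hh0))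

lemma corner_id_eq {h : H.carrier} {e' : (H.corner h).carrier}
    (he' : ∀ x : (H.corner h).carrier, e' * x = x) : e' = cornerOne H h :=
  ids_eq he' (cornerOne_id h)

namespace Wit

variable {h : H.carrier}

/-- the image of `h` in `St w.M` -/
def w0 (w : Wit H h) : (St w.M).carrier := w.φ ⟨h, w.hh⟩

/-- the subring of the corner algebra induced by `w.S` -/
def cSub (w : Wit H h) : NonUnitalSubring (H.corner h).carrier where
  carrier := {z | z.1 ∈ w.S}
  zero_mem' := w.S.zero_mem
  add_mem' := fun ha hb => w.S.add_mem ha hb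
  neg_mem' := fun ha => w.S.neg_mem ha
  mul_mem' := fun ha hb => w.S.mul_mem ha hb

/-- `h` as an element of `w.S` -/
def hS (w : Wit H h) : (H.restrict w.S).carrier := ⟨h, w.hh⟩

/-- lifting elements of the corner subalgebra to `w.S` -/
def lift2 (w : Wit H h) (z : ((H.corner h).restrict w.cSub).carrier) :
    (H.restrict w.S).carrier := ⟨z.1.1, z.2⟩

lemma key1 (w : Wit H h) (z : ((H.corner h).restrict w.cSub).carrier) :
    w.φ (w.lift2 z) = w.w0 * w.φ (w.lift2 z) := by
  have h1 : w.hS * w.lift2 z = w.lift2 z := by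
    apply Subtype.ext
    exact z.1.2
  calc w.φ (w.lift2 z) = w.φ (w.hS * w.lift2 z) := by rw [h1]
  _ = w.w0 * w.φ (w.lift2 z) := by rw [map_mul]; rfl

lemma key2 (w : Wit H h) (z : ((H.corner h).restrict w.cSub).carrier)
    (k : Fin w.M) (hk : k ∉ supp w.w0) : w.φ (w.lift2 z) k = 0 := by
  have h0 : w.w0 k = 0 := zmod2_ne_one (fun hc => hk (mem_supp.mpr hc))
  have h1 : w.φ (w.lift2 z) k = w.w0 k * w.φ (w.lift2 z) k := congrFun (w.key1 z) k
  rw [h0, zero_mul] at h1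
  exact h1

/-- the support enumeration -/
def ε (w : Wit H h) : Fin w.a ≃ {x // x ∈ supp w.w0} := (supp w.w0).equivFin.symm

/-- the forward map to `St w.a` -/
def ρf (w : Wit H h) (z : ((H.corner h).restrict w.cSub).carrier) : (St w.a).carrier :=
  fun j => w.φ (w.lift2 z) (w.ε j).1

lemma ρf_inj (w : Wit H h) : Function.Injective w.ρf := by
  intro z z' hzz
  have hφeq : w.φ (w.lift2 z) = w.φ (w.lift2 z') := by
    funext k
    by_cases hk : k ∈ supp w.w0
    · have h2 := congrFun hzz (w.ε.symm ⟨k, hk⟩)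
      have he1 : (w.ε (w.ε.symm ⟨k, hk⟩)).1 = k := by rw [Equiv.apply_symm_apply]
      show w.φ (w.lift2 z) k = w.φ (w.lift2 z') k
      rw [← he1]
      exact h2
    · rw [w.key2 z k hk, w.key2 z' k hk]
  have h3 := w.φ.injective hφeq
  exact Subtype.ext (Subtype.ext (congrArg (fun (q : (H.restrict w.S).carrier) => q.1) h3))

lemma ρf_surj (w : Wit H h) : Function.Surjective w.ρf := by
  intro y
  set Y : (St w.M).carrier := fun k => if hk : k ∈ supp w.w0 then y (w.ε.symm ⟨k, hk⟩) else 0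
    with hY
  have hwY : w.w0 * Y = Y := by
    funext k
    show w.w0 k * Y k = Y k
    by_cases hk : k ∈ supp w.w0
    · rw [mem_supp.mp hk, one_mul]
    · have h5 : Y k = 0 := dif_neg hk
      rw [h5, mul_zero]
  have huc : h * (w.φ.symm Y).1 = (w.φ.symm Y).1 := by
    have h2 : w.hS * w.φ.symm Y = w.φ.symm Y := by
      apply w.φ.injective
      rw [map_mul, w.φ.apply_symm_apply]
      show w.φ w.hS * Y = Y
      exact hwY
    exact congrArg Subtype.val h2
  refine ⟨⟨⟨(w.φ.symm Y).1, huc⟩, (w.φ.symm Y).2⟩, ?_⟩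
  funext j
  show w.φ ⟨(w.φ.symm Y).1, (w.φ.symm Y).2⟩ (w.ε j).1 = y j
  have h6 : (⟨(w.φ.symm Y).1, (w.φ.symm Y).2⟩ : (H.restrict w.S).carrier) = w.φ.symm Y := rfl
  rw [h6, w.φ.apply_symm_apply]
  have hj : (w.ε j).1 ∈ supp w.w0 := (w.ε j).2
  show (if hk : (w.ε j).1 ∈ supp w.w0 then y (w.ε.symm ⟨(w.ε j).1, hk⟩) else 0) = y j
  rw [dif_pos hj]
  rw [show (⟨(w.ε j).1, hj⟩ : {x // x ∈ supp w.w0}) = w.ε j from Subtype.ext rfl,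
    Equiv.symm_apply_apply]

/-- the corner iso -/
def ρ (w : Wit H h) : ((H.corner h).restrict w.cSub).carrier ≃+* (St w.a).carrier :=
  { Equiv.ofBijective w.ρf ⟨w.ρf_inj, w.ρf_surj⟩ with
    map_mul' := by
      intro z z'
      show w.ρf (z * z') = w.ρf z * w.ρf z'
      funext j
      show w.φ (w.lift2 (z * z')) (w.ε j).1 = w.φ (w.lift2 z) (w.ε j).1 * w.φ (w.lift2 z') (w.ε j).1
      have hl : w.lift2 (z * z') = w.lift2 z * w.lift2 z' := Subtype.ext rfl
      rw [hl, map_mul]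
      rfl
    map_add' := by
      intro z z'
      show w.ρf (z + z') = w.ρf z + w.ρf z'
      funext j
      show w.φ (w.lift2 (z + z')) (w.ε j).1 = w.φ (w.lift2 z) (w.ε j).1 + w.φ (w.lift2 z') (w.ε j).1
      have hl : w.lift2 (z + z') = w.lift2 z + w.lift2 z' := Subtype.ext rfl
      rw [hl, map_add]
      rfl }

lemma ρ_card (w : Wit H h) (z : ((H.corner h).restrict w.cSub).carrier) :
    (supp (w.ρf z)).card = (supp (w.φ (w.lift2 z))).card := by
  apply Finset.card_bij (fun j _ => (w.ε j).1)
  · intro j hj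
    have h1 : w.ρf z j = 1 := mem_supp.mp hj
    exact mem_supp.mpr h1
  · intro j _ j' _ hjj
    exact w.ε.injective (Subtype.ext hjj)
  · intro k hk
    have hkA : k ∈ supp w.w0 := by
      by_contra hc
      have h2 := mem_supp.mp hk
      rw [w.key2 z k hc] at h2
      exact absurd h2 (by decide)
    refine ⟨w.ε.symm ⟨k, hkA⟩, ?_, ?_⟩
    · rw [mem_supp]
      show w.φ (w.lift2 z) (w.ε (w.ε.symm ⟨k, hkA⟩)).1 = 1
      rw [Equiv.apply_symm_apply]
      exact mem_supp.mp hk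
    · show (w.ε (w.ε.symm ⟨k, hkA⟩)).1 = k
      rw [Equiv.apply_symm_apply]

lemma ρ_mu (w : Wit H h) (hh0 : h ≠ 0) (z : ((H.corner h).restrict w.cSub).carrier) :
    (St w.a).mu (w.ρ z) = ((H.corner h).restrict w.cSub).mu z := by
  show (St w.a).mu (w.ρf z) = H.mu z.1.1 / H.mu h
  rw [st_mu, w.ρ_card z]
  have h1 : H.mu z.1.1 = (St w.M).mu (w.φ (w.lift2 z)) := (w.hmu (w.lift2 z)).symm
  rw [h1, st_mu, w.mu_h]
  have hM0 : (w.M : ℝ) ≠ 0 := by have := w.hM; positivity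
  have hA0 : (w.a : ℝ) ≠ 0 := by have := w.a_pos hh0; positivity
  field_simp

lemma a_mem_corner_D (w : Wit H h) (hh0 : h ≠ 0) : w.a ∈ (H.corner h).D :=
  ⟨w.cSub, ⟨cornerOne H h, w.hh, cornerOne_id h⟩, ⟨w.ρ, w.ρ_mu hh0⟩⟩

end Wit

end SpecProof4
section SpecProof5
open MeasureAlgebra SteinitzNumber Finset

variable {H : MeasureAlgebra}

/-- Every element of `D(H_h)` divides `w'.a` for some witness `w'`. -/
lemma corner_D_div (hu : H.Unital) (hls : H.LocallyStandard) {h : H.carrier}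
    (hh0 : h ≠ 0) {m : ℕ} (hm : m ∈ (H.corner h).D) :
    ∃ w' : Wit H h, m ∣ w'.a := by
  classical
  obtain ⟨T, ⟨e', he'T, he'⟩, ψ, hψ⟩ := hm
  have hm0 : 0 < m := D_pos (corner_unital hh0) ⟨T, ⟨e', he'T, he'⟩, ψ, hψ⟩
  have hfin : ((T : Set (H.corner h).carrier)).Finite := S_finite ψ
  have hfin2 : ((fun (z : (H.corner h).carrier) => z.1) '' T).Finite := hfin.image _
  obtain ⟨w', hw'⟩ := exists_wit hu hls hfin2.toFinset h
  have hmem : ∀ z : (H.corner h).carrier, z ∈ T → (z.1 : H.carrier) ∈ w'.S := by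
    intro z hz
    apply hw'
    simp only [Finset.coe_sort_coe, Set.Finite.coe_toFinset, Set.mem_image]
    exact ⟨z, hz, rfl⟩
  let ι : (St m).carrier →ₙ+* (St w'.M).carrier :=
    { toFun := fun y => w'.φ ⟨(ψ.symm y).1.1, hmem (ψ.symm y).1 (ψ.symm y).2⟩
      map_zero' := by
        dsimp only
        have h0 : ψ.symm 0 = 0 := map_zero _
        rw [show (⟨(ψ.symm 0).1.1, hmem (ψ.symm 0).1 (ψ.symm 0).2⟩ :
          (H.restrict w'.S).carrier) = 0 from Subtype.ext (by rw [h0]; rfl), map_zero]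
      map_add' := by
        intro y y'
        dsimp only
        rw [← map_add w'.φ]
        congr 1
        apply Subtype.ext
        show ((ψ.symm (y + y')).1.1 : H.carrier) = (ψ.symm y).1.1 + (ψ.symm y').1.1
        rw [map_add ψ.symm]
        rfl
      map_mul' := by
        intro y y'
        dsimp only
        rw [← map_mul w'.φ]
        congr 1
        apply Subtype.ext
        show ((ψ.symm (y * y')).1.1 : H.carrier) = (ψ.symm y).1.1 * (ψ.symm y').1.1
        rw [map_mul ψ.symm]
        rfl }
  have hc : ∀ x, (St w'.M).mu (ι x) = H.mu h * (St m).mu x := by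
    intro x
    show (St w'.M).mu (w'.φ ⟨(ψ.symm x).1.1, _⟩) = H.mu h * (St m).mu x
    rw [w'.hmu]
    have h2 := hψ (ψ.symm x)
    rw [ψ.apply_symm_apply] at h2
    have h3 : (St m).mu x = H.mu ((ψ.symm x).1.1) / H.mu h := h2
    rw [h3, mul_div_cancel₀ _ (ne_of_gt (mu_pos H hh0))]
  have hι1 : ι (fun _ => 1) = w'.φ ⟨h, w'.hh⟩ := by
    show w'.φ ⟨(ψ.symm (fun _ => 1)).1.1, _⟩ = w'.φ ⟨h, w'.hh⟩
    apply congrArg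
    apply Subtype.ext
    show ((ψ.symm (fun _ => 1)).1.1 : H.carrier) = h
    have hsymm : ψ.symm (fun _ => 1) = ⟨e', he'T⟩ := by
      rw [← phi_id_eq_one hm0 ψ he'T he', ψ.symm_apply_apply]
    rw [hsymm]
    show (e'.1 : H.carrier) = h
    rw [corner_id_eq he']
    rfl
  have hdvd := emb_dvd hm0 w'.hM ι hc
  rw [hι1] at hdvd
  exact ⟨w', hdvd⟩

lemma fact_le_of_dvd {m M : ℕ} (h : m ∣ M) (hM : M ≠ 0) (p : ℕ) :
    m.factorization p ≤ M.factorization p := by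
  have hm : m ≠ 0 := by rintro rfl; exact hM (zero_dvd_iff.mp h)
  exact (Nat.factorization_le_iff_dvd hm hM).mpr h p

lemma fact_add {a b : ℕ} (ha : a ≠ 0) (hb : b ≠ 0) (p : ℕ) :
    (a * b).factorization p = a.factorization p + b.factorization p := by
  rw [Nat.factorization_mul ha hb]
  rfl

lemma exists_le_of_le_biSup {c : ℕ} {f : ℕ → ℕ∞} {D : Set ℕ} (hD : D.Nonempty)
    (h : (c : ℕ∞) ≤ ⨆ n ∈ D, f n) : ∃ n ∈ D, (c : ℕ∞) ≤ f n := by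
  by_contra hc
  push_neg at hc
  obtain ⟨n0, hn0⟩ := hD
  cases c with
  | zero =>
    have hx := hc n0 hn0
    simp at hx
  | succ k =>
    have hb : ∀ n ∈ D, f n ≤ (k : ℕ∞) := by
      intro n hn
      have hlt := hc n hn
      have hne : f n ≠ ⊤ := ne_top_of_lt hlt
      lift f n to ℕ using hne with j
      have : j < k + 1 := by exact_mod_cast hlt
      exact_mod_cast Nat.lt_succ_iff.mp this
    have hsup : (⨆ n ∈ D, f n) ≤ (k : ℕ∞) := iSup₂_le hb
    have : ((k + 1 : ℕ) : ℕ∞) ≤ (k : ℕ∞) := le_trans h hsup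
    have : k + 1 ≤ k := by exact_mod_cast this
    omega

lemma st_apply (H : MeasureAlgebra) (p : Nat.Primes) :
    H.st p = ⨆ n ∈ H.D, ((n.factorization p : ℕ∞)) := rfl

lemma le_st {H : MeasureAlgebra} {N : ℕ} (hN : N ∈ H.D) (p : Nat.Primes) :
    ((N.factorization p : ℕ∞)) ≤ H.st p := by
  rw [st_apply]
  exact le_iSup₂ (f := fun n (_ : n ∈ H.D) => ((n.factorization p : ℕ∞))) N hN

/-- The key relation: `M · st(H_h) = a · st(H)` for any witness. -/
lemma st_corner (hu : H.Unital) (hls : H.LocallyStandard) {h : H.carrier}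
    (hh0 : h ≠ 0) (w : Wit H h) (p : Nat.Primes) :
    ((w.M.factorization p : ℕ∞)) + (H.corner h).st p
      = ((w.a.factorization p : ℕ∞)) + H.st p := by
  haveI ne1 : Nonempty {n // n ∈ (H.corner h).D} := ⟨⟨w.a, w.a_mem_corner_D hh0⟩⟩
  haveI ne2 : Nonempty {n // n ∈ H.D} := ⟨⟨w.M, w.mem_D⟩⟩
  have hsub1 : (H.corner h).st p
      = ⨆ x : {n // n ∈ (H.corner h).D}, ((x.1.factorization p : ℕ∞)) := by
    rw [st_apply, iSup_subtype]
  have hsub2 : H.st p = ⨆ x : {n // n ∈ H.D}, ((x.1.factorization p : ℕ∞)) := by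
    rw [st_apply, iSup_subtype]
  apply le_antisymm
  · rw [hsub1, ENat.add_iSup]
    apply iSup_le
    rintro ⟨m, hm⟩
    obtain ⟨w', hdvd⟩ := corner_D_div hu hls hh0 hm
    have hnat : w.M.factorization p + w'.a.factorization p
        = w.a.factorization p + w'.M.factorization p := by
      have hcross : w.a * w'.M = w'.a * w.M := w.cross w' hh0
      have e1 : w.M.factorization p + w'.a.factorization p
          = (w.M * w'.a).factorization p :=
        (fact_add (w.hM.ne') ((w'.a_pos hh0).ne') p).symm
      have e2 : (w.a * w'.M).factorization p
          = w.a.factorization p + w'.M.factorization p :=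
        fact_add ((w.a_pos hh0).ne') (w'.hM.ne') p
      rw [e1, show w.M * w'.a = w.a * w'.M by rw [mul_comm, hcross], e2]
    calc ((w.M.factorization p : ℕ∞)) + ((m.factorization p : ℕ∞))
        ≤ ((w.M.factorization p : ℕ∞)) + ((w'.a.factorization p : ℕ∞)) := by
          apply add_le_add_right
          exact_mod_cast fact_le_of_dvd hdvd ((w'.a_pos hh0).ne') p
      _ = ((w.a.factorization p : ℕ∞)) + ((w'.M.factorization p : ℕ∞)) := by
          exact_mod_cast congrArg (Nat.cast : ℕ → ℕ∞) hnat
      _ ≤ ((w.a.factorization p : ℕ∞)) + H.st p :=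
          add_le_add_right (le_st w'.mem_D p) _
  · rw [hsub2, ENat.add_iSup]
    apply iSup_le
    rintro ⟨N, hN⟩
    obtain ⟨w', hdvd'⟩ := exists_wit_dvd hu hls h {N} (by simpa using hN)
    have hdvd : N ∣ w'.M := hdvd' N (Finset.mem_singleton_self N)
    have hnat : w.a.factorization p + w'.M.factorization p
        = w.M.factorization p + w'.a.factorization p := by
      have hcross : w.a * w'.M = w'.a * w.M := w.cross w' hh0
      have e1 : w.a.factorization p + w'.M.factorization p
          = (w.a * w'.M).factorization p :=
        (fact_add ((w.a_pos hh0).ne') (w'.hM.ne') p).symm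
      have e2 : (w.M * w'.a).factorization p
          = w.M.factorization p + w'.a.factorization p :=
        fact_add (w.hM.ne') ((w'.a_pos hh0).ne') p
      rw [e1, hcross, show w'.a * w.M = w.M * w'.a from mul_comm _ _, e2]
    calc ((w.a.factorization p : ℕ∞)) + ((N.factorization p : ℕ∞))
        ≤ ((w.a.factorization p : ℕ∞)) + ((w'.M.factorization p : ℕ∞)) := by
          apply add_le_add_right
          exact_mod_cast fact_le_of_dvd hdvd (w'.hM.ne') p
      _ = ((w.M.factorization p : ℕ∞)) + ((w'.a.factorization p : ℕ∞)) := by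
          exact_mod_cast congrArg (Nat.cast : ℕ → ℕ∞) hnat
      _ ≤ ((w.M.factorization p : ℕ∞)) + (H.corner h).st p := by
          apply add_le_add_right
          have := w'.a_mem_corner_D hh0
          rw [st_apply]
          exact le_iSup₂ (f := fun n (_ : n ∈ (H.corner h).D) =>
            ((n.factorization p : ℕ∞))) w'.a this

end SpecProof5
section SpecProof6
open MeasureAlgebra SteinitzNumber Finset

variable {H : MeasureAlgebra}

lemma exists_wit_of_natDvd (hu : H.Unital) (hls : H.LocallyStandard) {b : ℕ}
    (hb : SteinitzNumber.NatDvd b H.st) : ∃ w : Wit H 0, b ∣ w.M := by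
  classical
  obtain ⟨hb0, hble⟩ := hb
  have hch : ∀ q : ℕ, ∃ N : ℕ, q ∈ b.factorization.support →
      (N ∈ H.D ∧ b.factorization q ≤ N.factorization q) := by
    intro q
    by_cases hq : q ∈ b.factorization.support
    · have hqp : q.Prime := Nat.prime_of_mem_primeFactors
        (by rwa [Nat.support_factorization] at hq)
      have h1 := hble ⟨q, hqp⟩
      have hDne : H.D.Nonempty := by
        obtain ⟨w, -⟩ := exists_wit hu hls ∅ 0
        exact ⟨w.M, w.mem_D⟩
      change _ ≤ ⨆ n ∈ H.D, ((n.factorization (⟨q, hqp⟩ : Nat.Primes) : ℕ∞)) at h1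
      obtain ⟨N, hN, hle⟩ := exists_le_of_le_biSup hDne h1
      exact ⟨N, fun _ => ⟨hN, by exact_mod_cast hle⟩⟩
    · exact ⟨0, fun hc => absurd hc hq⟩
  choose g hg using hch
  have hL : ∀ N ∈ b.factorization.support.image g, N ∈ H.D := by
    intro N hN
    obtain ⟨q, hq, rfl⟩ := Finset.mem_image.mp hN
    exact (hg q hq).1
  obtain ⟨w, hw⟩ := exists_wit_dvd hu hls 0 _ hL
  refine ⟨w, ?_⟩
  have hM0 : w.M ≠ 0 := w.hM.ne'
  rw [← Nat.factorization_le_iff_dvd hb0.ne' hM0, Finsupp.le_def]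
  intro q
  by_cases hq : q ∈ b.factorization.support
  · calc b.factorization q ≤ (g q).factorization q := (hg q hq).2
      _ ≤ w.M.factorization q :=
        fact_le_of_dvd (hw _ (Finset.mem_image_of_mem g hq)) hM0 q
  · simp [Finsupp.notMem_support_iff.mp hq]

/-- Main description of the spectrum. -/
lemma spec_eq (hu : H.Unital) (hls : H.LocallyStandard) :
    H.Spec = {t | ∃ a b : ℕ, 0 < a ∧ a ≤ b ∧ SteinitzNumber.NatDvd b H.st ∧
      SteinitzNumber.ofNat b * t = SteinitzNumber.ofNat a * H.st} := by
  classical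
  ext t
  constructor
  · rintro ⟨h, hh0, hst⟩
    obtain ⟨w, -⟩ := exists_wit hu hls ∅ h
    refine ⟨w.a, w.M, w.a_pos hh0, w.a_le, ⟨w.hM, fun p => le_st w.mem_D p⟩, ?_⟩
    funext p
    show ((w.M.factorization p : ℕ∞)) + t p = ((w.a.factorization p : ℕ∞)) + H.st p
    rw [← hst]
    exact st_corner hu hls hh0 w p
  · rintro ⟨a, b, ha, hab, hbs, heq⟩
    obtain ⟨w0, hbM⟩ := exists_wit_of_natDvd hu hls hbs
    have hb0 : 0 < b := hbs.1
    have hM : 0 < w0.M := w0.hM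
    have hbk : b * (a * (w0.M / b)) = a * w0.M := by
      rw [← mul_assoc, mul_comm b a, mul_assoc, Nat.mul_div_cancel' hbM]
    have hk0 : 0 < a * (w0.M / b) :=
      Nat.mul_pos ha (Nat.div_pos (Nat.le_of_dvd hM hbM) hb0)
    have hkM : a * (w0.M / b) ≤ w0.M := by
      calc a * (w0.M / b) ≤ b * (w0.M / b) := Nat.mul_le_mul_right _ hab
        _ = w0.M := Nat.mul_div_cancel' hbM
    obtain ⟨A, -, hA⟩ := Finset.exists_subset_card_eq (s := (Finset.univ : Finset (Fin w0.M)))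
      (n := a * (w0.M / b)) (by simpa using hkM)
    set x : (St w0.M).carrier := fun i => if i ∈ A then 1 else 0 with hx
    have hsx : supp x = A := by
      ext i
      rw [mem_supp]
      show (if i ∈ A then (1:ZMod 2) else 0) = 1 ↔ i ∈ A
      split
      · simp_all
      · constructor
        · intro hc; exact absurd hc (by decide)
        · intro hc; simp_all
    have hmem : (w0.φ.symm x).1 ∈ w0.S := (w0.φ.symm x).2
    have hφh : w0.φ ⟨(w0.φ.symm x).1, hmem⟩ = x := by
      rw [show (⟨(w0.φ.symm x).1, hmem⟩ : (H.restrict w0.S).carrier) = w0.φ.symm x from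
        Subtype.ext rfl, w0.φ.apply_symm_apply]
    have hh0 : (w0.φ.symm x).1 ≠ 0 := by
      intro hc
      have hx0 : x = 0 := by
        rw [← hφh, show (⟨(w0.φ.symm x).1, hmem⟩ : (H.restrict w0.S).carrier) = 0 from
          Subtype.ext hc, map_zero]
      obtain ⟨i, hi⟩ := Finset.card_pos.mp (hA ▸ hk0)
      have h1 : x i = 1 := by rw [hx]; simp [hi]
      rw [hx0] at h1
      have h2 : (0 : (St w0.M).carrier) i = 0 := rfl
      rw [h2] at h1
      exact absurd h1 (by decide)
    set h : H.carrier := (w0.φ.symm x).1 with hh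
    let w : Wit H h := ⟨w0.S, w0.M, w0.φ, w0.hM, w0.hmu, hmem, w0.e, w0.heS, w0.he⟩
    have hwa : w.a = a * (w0.M / b) := by
      show (supp (w0.φ ⟨h, hmem⟩)).card = a * (w0.M / b)
      rw [hφh, hsx, hA]
    refine ⟨h, hh0, ?_⟩
    funext p
    have E1 : ((w0.M.factorization p : ℕ∞)) + (H.corner h).st p
        = (((a * (w0.M / b)).factorization p : ℕ∞)) + H.st p := by
      have := st_corner hu hls hh0 w p
      rwa [hwa] at this
    have E2 : ((b.factorization p : ℕ∞)) + (((a * (w0.M / b)).factorization p : ℕ∞))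
        = ((a.factorization p : ℕ∞)) + ((w0.M.factorization p : ℕ∞)) := by
      have hn : b.factorization p + (a * (w0.M / b)).factorization p
          = a.factorization p + w0.M.factorization p := by
        rw [← fact_add hb0.ne' hk0.ne', hbk, fact_add ha.ne' hM.ne']
      exact_mod_cast hn
    have E3 : ((b.factorization p : ℕ∞)) + t p
        = ((a.factorization p : ℕ∞)) + H.st p := congrFun heq p
    show (H.corner h).st p = t p
    have C1 : ((w0.M.factorization p : ℕ∞))
          + (((b.factorization p : ℕ∞)) + (H.corner h).st p)
        = ((w0.M.factorization p : ℕ∞)) + (((b.factorization p : ℕ∞)) + t p) := by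
      calc ((w0.M.factorization p : ℕ∞)) + (((b.factorization p : ℕ∞)) + (H.corner h).st p)
          = ((b.factorization p : ℕ∞))
            + (((w0.M.factorization p : ℕ∞)) + (H.corner h).st p) := by
            rw [add_left_comm]
        _ = ((b.factorization p : ℕ∞))
            + ((((a * (w0.M / b)).factorization p : ℕ∞)) + H.st p) := by rw [E1]
        _ = (((b.factorization p : ℕ∞)) + (((a * (w0.M / b)).factorization p : ℕ∞)))
            + H.st p := by rw [add_assoc]
        _ = (((a.factorization p : ℕ∞)) + ((w0.M.factorization p : ℕ∞))) + H.st p := by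
            rw [E2]
        _ = ((w0.M.factorization p : ℕ∞)) + (((a.factorization p : ℕ∞)) + H.st p) := by
            rw [add_comm ((a.factorization p : ℕ∞)), add_assoc]
        _ = ((w0.M.factorization p : ℕ∞)) + (((b.factorization p : ℕ∞)) + t p) := by
            rw [E3]
    have C2 := WithTop.add_left_cancel (ENat.coe_ne_top _) C1
    exact WithTop.add_left_cancel (ENat.coe_ne_top _) C2

end SpecProof6
section SpecProof7
open MeasureAlgebra SteinitzNumber Finset

lemma st_unital {n : ℕ} (hn : 0 < n) : (St n).Unital := by
  refine ⟨(fun _ => 1), ?_, mu_one hn⟩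
  intro x
  funext i
  show (1 : ZMod 2) * x i = x i
  exact one_mul _

/-- the iso `↥⊤ ≃+* St n` -/
def topIso (n : ℕ) : ((St n).restrict ⊤).carrier ≃+* (St n).carrier :=
  NonUnitalSubring.topEquiv

lemma topIso_mu {n : ℕ} (z : ((St n).restrict ⊤).carrier) :
    (St n).mu (topIso n z) = ((St n).restrict ⊤).mu z := rfl

lemma st_ls {n : ℕ} (hn : 0 < n) : (St n).LocallyStandard := by
  intro t
  refine ⟨⊤, n, hn, fun x _ => NonUnitalSubring.mem_top x, 1, one_pos, topIso n, ?_⟩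
  intro z
  rw [one_mul]
  exact topIso_mu z

lemma n_mem_D {n : ℕ} (hn : 0 < n) : n ∈ (St n).D := by
  obtain ⟨e, he, -⟩ := st_unital hn
  exact ⟨⊤, ⟨e, NonUnitalSubring.mem_top e, he⟩, topIso n, fun z => topIso_mu z⟩

lemma st_St {n : ℕ} (hn : 0 < n) : (St n).st = SteinitzNumber.ofNat n := by
  funext p
  apply le_antisymm
  · rw [st_apply]
    apply iSup₂_le
    intro m hm
    have hm0 : 0 < m := D_pos (st_unital hn) hm
    obtain ⟨S₁, ⟨e₁, he₁S, he₁⟩, φ₁, hφ₁⟩ := hm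
    have hdvd : m ∣ n := dvd_of_subset hm0 hn φ₁ (fun z => hφ₁ z) he₁S he₁
      (topIso n) (fun z => topIso_mu z) (fun x _ => NonUnitalSubring.mem_top x)
    show ((m.factorization p : ℕ∞)) ≤ ((n.factorization p : ℕ∞))
    exact_mod_cast fact_le_of_dvd hdvd hn.ne' p
  · exact le_st (n_mem_D hn) p

lemma natDvd_ofNat_iff {b n : ℕ} (hn : 0 < n) :
    SteinitzNumber.NatDvd b (SteinitzNumber.ofNat n) ↔ 0 < b ∧ b ∣ n := by
  constructor
  · rintro ⟨hb0, hle⟩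
    refine ⟨hb0, ?_⟩
    rw [← Nat.factorization_le_iff_dvd hb0.ne' hn.ne', Finsupp.le_def]
    intro q
    by_cases hq : q.Prime
    · have h2 : ((b.factorization q : ℕ∞)) ≤ ((n.factorization q : ℕ∞)) := hle ⟨q, hq⟩
      exact_mod_cast h2
    · rw [Nat.factorization_eq_zero_of_not_prime b hq]
      exact Nat.zero_le _
  · rintro ⟨hb0, hdvd⟩
    refine ⟨hb0, fun p => ?_⟩
    show ((b.factorization (p:ℕ) : ℕ∞)) ≤ ((n.factorization (p:ℕ) : ℕ∞))
    exact_mod_cast fact_le_of_dvd hdvd hn.ne' p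

lemma ofNat_mul_ofNat {a b : ℕ} (ha : a ≠ 0) (hb : b ≠ 0) :
    SteinitzNumber.ofNat a * SteinitzNumber.ofNat b = SteinitzNumber.ofNat (a * b) := by
  funext p
  show ((a.factorization p : ℕ∞)) + ((b.factorization p : ℕ∞))
    = (((a * b).factorization p : ℕ∞))
  rw [fact_add ha hb]
  push_cast
  rfl

lemma ofNat_mul_cancel {b : ℕ} {t t' : SteinitzNumber}
    (h : SteinitzNumber.ofNat b * t = SteinitzNumber.ofNat b * t') : t = t' := by
  funext p
  exact WithTop.add_left_cancel (ENat.coe_ne_top _) (congrFun h p)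

end SpecProof7

theorem spec_of_unital'
    (H : MeasureAlgebra) (hu : H.Unital) (hls : H.LocallyStandard)
    (s : SteinitzNumber) (hs : H.st = s) :
    H.Spec = {t | ∃ a b : ℕ, 0 < a ∧ a ≤ b ∧ SteinitzNumber.NatDvd b s ∧
        SteinitzNumber.ofNat b * t = SteinitzNumber.ofNat a * s} ∧
    (∀ n : ℕ, 0 < n →
      (MeasureAlgebra.St n).Spec = {t | ∃ k : ℕ, 1 ≤ k ∧ k ≤ n ∧ t = SteinitzNumber.ofNat k}) := by
  subst hs
  constructor
  · exact spec_eq hu hls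
  · intro n hn
    rw [spec_eq (st_unital hn) (st_ls hn), st_St hn]
    ext t
    simp only [Set.mem_setOf_eq]
    constructor
    · rintro ⟨a, b, ha, hab, hbd, heq⟩
      obtain ⟨hb0, hbn⟩ := (natDvd_ofNat_iff hn).mp hbd
      have hbk : b * (a * (n / b)) = a * n := by
        rw [← mul_assoc, mul_comm b a, mul_assoc, Nat.mul_div_cancel' hbn]
      have hk0 : 0 < a * (n / b) :=
        Nat.mul_pos ha (Nat.div_pos (Nat.le_of_dvd hn hbn) hb0)
      have hkn : a * (n / b) ≤ n := by
        calc a * (n / b) ≤ b * (n / b) := Nat.mul_le_mul_right _ hab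
          _ = n := Nat.mul_div_cancel' hbn
      refine ⟨a * (n / b), hk0, hkn, ?_⟩
      apply ofNat_mul_cancel (b := b)
      rw [heq, ofNat_mul_ofNat ha.ne' hn.ne', ofNat_mul_ofNat hb0.ne' hk0.ne', hbk]
    · rintro ⟨k, hk1, hkn, rfl⟩
      have hk0 : 0 < k := hk1
      refine ⟨k, n, hk0, hkn, (natDvd_ofNat_iff hn).mpr ⟨hn, dvd_refl n⟩, ?_⟩
      rw [ofNat_mul_ofNat hn.ne' hk0.ne', ofNat_mul_ofNat hk0.ne' hn.ne', mul_comm]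

/-- Let `H` be a unital locally standard measure algebra with `st(H) = s`. Then
`Spec(H) = { (a/b)·s : b ∈ Ω(s), 1 ≤ a ≤ b }`. In particular,
`Spec(Stₙ) = {1, 2, …, n}`. -/
theorem spec_of_unital
    (H : MeasureAlgebra) (hu : H.Unital) (hls : H.LocallyStandard)
    (s : SteinitzNumber) (hs : H.st = s) :
    H.Spec = {t | ∃ a b : ℕ, 0 < a ∧ a ≤ b ∧ SteinitzNumber.NatDvd b s ∧
        SteinitzNumber.ofNat b * t = SteinitzNumber.ofNat a * s} ∧
    (∀ n : ℕ, 0 < n →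
      (MeasureAlgebra.St n).Spec = {t | ∃ k : ℕ, 1 ≤ k ∧ k ≤ n ∧ t = SteinitzNumber.ofNat k}) := by
  exact spec_of_unital' H hu hls s hs
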